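/- Let m ≥ 1 be odd and let a : ZMod m → ℕ with a(i) ≥ 2 for all i. Let N = min { a(i) : i ∈ ZMod m } and define b : ZMod m → ℕ by b(i) = N for all i. Then R_{C_m}(a) = R_{C_m}(b), where for t : ZMod m → ℕ, R_{C_m}(t) denotes the least n such that every colouring of the complete graph on n vertices with colours in ZMod m is C_m-switch equivalent to a colouring containing, for some colour i, a monochromatic K_{t(i)} of colour i. -/

import Mathlib

/-- The edges (unordered pairs of distinct vertices) of the complete graph on `Fin n`. -/
abbrev NonDiagEdge (n : ℕ) := {s : Sym2 (Fin n) // ¬ s.IsDiag}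

/-- The `C_m`-switch of the colouring `c` by `k`: the edge `{u,v}` gets the colour
`c {u,v} + k u + k v`. -/
def CmSwitch {m n : ℕ} (c : NonDiagEdge n → ZMod m) (k : Fin n → ZMod m) :
    NonDiagEdge n → ZMod m :=
  fun e => c e + Sym2.lift ⟨fun u v => k u + k v, fun u v => add_comm (k u) (k v)⟩ e.1

/-- The colouring `c` contains a monochromatic complete graph on `t` vertices of colour `i`. -/
def HasMono {m n : ℕ} (c : NonDiagEdge n → ZMod m) (i : ZMod m) (t : ℕ) : Prop :=
  ∃ S : Finset (Fin n), S.card = t ∧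
    ∀ x ∈ S, ∀ y ∈ S, ∀ h : x ≠ y, c ⟨s(x, y), by simpa using h⟩ = i

/-- The `C_m`-switch Ramsey number: the least `n` such that every colouring of `K_n` with
colours in `ZMod m` is `C_m`-switch equivalent to one containing, for some colour `i`, a
monochromatic `K_{t i}` of colour `i`. -/
noncomputable def RCm (m : ℕ) (t : ZMod m → ℕ) : ℕ :=
  sInf {n : ℕ | ∀ c : NonDiagEdge n → ZMod m,
    ∃ k : Fin n → ZMod m, ∃ i : ZMod m, HasMono (CmSwitch c k) i (t i)}

/-- For odd `m`, `R_{C_m}(a₁,…,a_m) = R_{C_m}(N,N,…,N)` where `N = min_i a i`. -/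
theorem stmt16 (m : ℕ) (hm : 1 ≤ m) (hodd : Odd m)
    (a : ZMod m → ℕ) (ha : ∀ i, 2 ≤ a i) :
    RCm m a = RCm m (fun _ => ⨅ i, a i) := by
  have hne : Nonempty (ZMod m) := ⟨0⟩
  have key : {n : ℕ | ∀ c : NonDiagEdge n → ZMod m,
        ∃ k : Fin n → ZMod m, ∃ i : ZMod m, HasMono (CmSwitch c k) i (a i)} =
      {n : ℕ | ∀ c : NonDiagEdge n → ZMod m,
        ∃ k : Fin n → ZMod m, ∃ i : ZMod m,
          HasMono (CmSwitch c k) i ((fun _ => ⨅ i, a i) i)} := by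
    ext n
    simp only [Set.mem_setOf_eq]
    constructor
    · intro h c
      obtain ⟨k, i, S, hS, hmono⟩ := h c
      have hle : (⨅ i, a i) ≤ a i := ciInf_le (OrderBot.bddBelow _) i
      obtain ⟨T, hTS, hT⟩ := Finset.exists_subset_card_eq (hle.trans_eq hS.symm)
      exact ⟨k, i, T, hT, fun x hx y hy hxy => hmono x (hTS hx) y (hTS hy) hxy⟩
    · intro h c
      obtain ⟨k, i, S, hS, hmono⟩ := h c
      obtain ⟨j, hj⟩ : ∃ j, a j = ⨅ i, a i := by
        have hmem := Nat.sInf_mem (Set.range_nonempty a)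
        rw [iInf]
        exact hmem
      obtain ⟨r, hr⟩ := hodd
      set κ : ZMod m := ((r + 1 : ℕ) : ZMod m) * (j - i) with hκ
      have h2 : κ + κ = j - i := by
        have hone : ((2 * (r + 1) : ℕ) : ZMod m) = 1 := by
          have hmm : (2 * (r + 1) : ℕ) = m + 1 := by omega
          rw [hmm]
          push_cast
          simp [ZMod.natCast_self]
        calc κ + κ = ((2 * (r + 1) : ℕ) : ZMod m) * (j - i) := by
              rw [hκ]; push_cast; ring
          _ = j - i := by rw [hone, one_mul]
      refine ⟨fun v => k v + if v ∈ S then κ else 0, j, S, hS.trans hj.symm, ?_⟩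
      intro x hx y hy hxy
      have hold := hmono x hx y hy hxy
      simp only [CmSwitch, Sym2.lift_mk] at hold ⊢
      rw [if_pos hx, if_pos hy]
      linear_combination hold + h2
  unfold RCm
  exact congrArg sInf key
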